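/- (The outgoing two-point function of the black hole equals the thermal two-point function at inverse temperature β = 2π/M, as kernels smeared with test functions of zero mean.) Fix M > 0 and set β = 2π/M. Define K_BH(y,y') = log|e^{−My} − e^{−My'}| + iπ·𝟙_{y'<y} and K_th(y,y') = log( (β/π)·|sinh(π(y'−y)/β)| ) + iπ·𝟙_{y'<y}. Then for all Schwartz functions f₁, f₂ : ℝ → ℂ with ∫_ℝ f₁ = ∫_ℝ f₂ = 0, ∬_{ℝ²} f₁(y)·conj(f₂(y'))·K_BH(y,y') dy dy' = ∬_{ℝ²} f₁(y)·conj(f₂(y'))·K_th(y,y') dy dy', both integrals being absolutely convergent. -/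

import Mathlib

open MeasureTheory

noncomputable def Fsing0 : ℝ → ℝ :=
  Set.indicator (Set.Ioc (0:ℝ) 1) (fun s => 2 * s ^ (-(1/2) : ℝ))

noncomputable def Fsing (t : ℝ) : ℝ := Fsing0 |t|

lemma Fsing0_nonneg (s : ℝ) : 0 ≤ Fsing0 s := by
  apply Set.indicator_nonneg
  intro s hs
  exact mul_nonneg (by norm_num) (Real.rpow_nonneg hs.1.le _)

lemma Fsing_nonneg (t : ℝ) : 0 ≤ Fsing t := Fsing0_nonneg _

lemma Fsing_neg (t : ℝ) : Fsing (-t) = Fsing t := by simp [Fsing]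

lemma Fsing0_integrable : Integrable Fsing0 := by
  rw [Fsing0, integrable_indicator_iff measurableSet_Ioc]
  have h := intervalIntegral.intervalIntegrable_rpow' (a := 0) (b := 1)
    (r := -(1/2)) (by norm_num)
  rw [intervalIntegrable_iff_integrableOn_Ioc_of_le zero_le_one] at h
  exact h.const_mul 2

lemma Fsing_integrable : Integrable Fsing := by
  have m : MeasurableEmbedding (fun x : ℝ => -x) := (Homeomorph.neg ℝ).measurableEmbedding
  have hIoi : IntegrableOn Fsing (Set.Ioi (0:ℝ)) := by
    apply (Fsing0_integrable.integrableOn).congr_fun ?_ measurableSet_Ioi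
    intro x hx
    simp [Fsing, abs_of_pos (Set.mem_Ioi.mp hx)]
  have hIic : IntegrableOn Fsing (Set.Iic (0:ℝ)) := by
    rw [IntegrableOn, ← Measure.map_neg_eq_self (volume : Measure ℝ)]
    rw [← IntegrableOn, m.integrableOn_map_iff]
    have h1 : ((fun x : ℝ => -x) ⁻¹' Set.Iic 0) = Set.Ici 0 := by
      ext x; simp
    have h2 : (Fsing ∘ fun x : ℝ => -x) = Fsing := by
      funext x; simp [Fsing]
    rw [h1, h2]
    exact (integrableOn_Ici_iff_integrableOn_Ioi).mpr hIoi
  have := hIic.union hIoi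
  rwa [Set.Iic_union_Ioi, integrableOn_univ] at this

lemma neg_log_le_Fsing0 {x : ℝ} (h0 : 0 < x) (h1 : x ≤ 1) : -Real.log x ≤ Fsing0 x := by
  have hs : (0:ℝ) < x ^ ((1:ℝ)/2) := Real.rpow_pos_of_pos h0 _
  have hlog : Real.log (x ^ ((1:ℝ)/2)) = (1/2) * Real.log x := Real.log_rpow h0 _
  have h2 : Real.log (x ^ ((1:ℝ)/2))⁻¹ ≤ (x ^ ((1:ℝ)/2))⁻¹ :=
    (Real.log_le_sub_one_of_pos (inv_pos.mpr hs)).trans (by linarith [inv_pos.mpr hs])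
  rw [Real.log_inv, hlog] at h2
  have hF : Fsing0 x = 2 * x ^ (-(1/2) : ℝ) := Set.indicator_of_mem (Set.mem_Ioc.mpr ⟨h0, h1⟩) _
  have : x ^ (-(1/2) : ℝ) = (x ^ ((1:ℝ)/2))⁻¹ := by
    rw [show (-(1/2) : ℝ) = -((1:ℝ)/2) by norm_num, Real.rpow_neg h0.le]
  rw [hF, this]
  linarith

lemma abs_log_abs_le (t : ℝ) : |Real.log (|t|)| ≤ |t| + Fsing t := by
  rcases eq_or_ne t 0 with rfl | ht
  · simp [Fsing, Fsing0, Real.log_zero]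
  · have h0 : 0 < |t| := abs_pos.mpr ht
    rcases le_or_gt (|t|) 1 with h1 | h1
    · have hlog : Real.log |t| ≤ 0 := Real.log_nonpos (abs_nonneg t) h1
      rw [abs_of_nonpos hlog]
      have := neg_log_le_Fsing0 h0 h1
      have hF : Fsing t = Fsing0 |t| := rfl
      linarith [abs_nonneg t]
    · have hlog : 0 ≤ Real.log |t| := Real.log_nonneg h1.le
      rw [abs_of_nonneg hlog]
      have := Real.log_le_sub_one_of_pos h0
      linarith [Fsing_nonneg t]

lemma abs_log_abs_sinh_le {u : ℝ} (hu : u ≠ 0) :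
    |Real.log (|Real.sinh u|)| ≤ |Real.log (|u|)| + |u| := by
  have h0 : 0 < |u| := abs_pos.mpr hu
  have hs0 : 0 < |Real.sinh u| := abs_pos.mpr (Real.sinh_ne_zero.mpr hu)
  have h1 : |u| ≤ |Real.sinh u| := by
    rw [Real.abs_sinh]; exact Real.self_le_sinh_iff.mpr (abs_nonneg u)
  have h2 : |Real.sinh u| ≤ Real.exp |u| := by
    rw [Real.abs_sinh, Real.sinh_eq]
    have := Real.exp_pos (-|u|)
    have := Real.exp_pos (|u|)
    linarith
  have hl : Real.log |u| ≤ Real.log |Real.sinh u| := (Real.log_le_log_iff h0 hs0).mpr h1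
  have hr : Real.log |Real.sinh u| ≤ |u| := by
    have := (Real.log_le_log_iff hs0 (Real.exp_pos _)).mpr h2
    rwa [Real.log_exp] at this
  rw [abs_le]
  constructor
  · linarith [neg_abs_le (Real.log |u|)]
  · linarith [le_abs_self (Real.log |u|), abs_nonneg (Real.log |u|)]

/-- Boundary-value kernel of the black hole outgoing two-point function. -/
noncomputable def K_BH (M : ℝ) (y y' : ℝ) : ℂ :=
  (Real.log |Real.exp (-(M * y)) - Real.exp (-(M * y'))| : ℂ)
    + (if y' < y then (Real.pi : ℂ) * Complex.I else 0)

/-- Boundary-value kernel of the thermal two-point function at inverse temperature β. -/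
noncomputable def K_th (β : ℝ) (y y' : ℝ) : ℂ :=
  (Real.log ((β / Real.pi) * |Real.sinh (Real.pi * (y' - y) / β)|) : ℂ)
    + (if y' < y then (Real.pi : ℂ) * Complex.I else 0)

lemma ind_norm_le (y y' : ℝ) :
    ‖(if y' < y then (Real.pi : ℂ) * Complex.I else 0)‖ ≤ Real.pi := by
  split_ifs
  · rw [norm_mul, Complex.norm_I, mul_one, Complex.norm_real, Real.norm_eq_abs,
      abs_of_pos Real.pi_pos]
  · simp [Real.pi_pos.le]

lemma K_th_norm_le (M : ℝ) (hM : 0 < M) (y y' : ℝ) :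
    ‖K_th (2 * Real.pi / M) y y'‖ ≤
      (Real.pi + 2 * |Real.log (M / 2)|) + (M / 2 + 1) * (|y| + |y'|) + Fsing (y - y') := by
  have hπ : (0:ℝ) < Real.pi := Real.pi_pos
  have hβπ : (2 * Real.pi / M) / Real.pi = 2 / M := by
    field_simp
  have harg : Real.pi * (y' - y) / (2 * Real.pi / M) = M * (y' - y) / 2 := by
    rw [div_div_eq_mul_div]
    rw [div_eq_div_iff (by positivity) (by norm_num)]
    ring
  have habs : |y' - y| ≤ |y| + |y'| := by
    calc |y' - y| ≤ |y'| + |y| := abs_sub _ _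
    _ = |y| + |y'| := by ring
  have hFs : Fsing (y - y') = Fsing (y' - y) := by
    rw [show y - y' = -(y' - y) by ring, Fsing_neg]
  rw [K_th, hβπ, harg]
  refine (norm_add_le _ _).trans ?_
  rw [Complex.norm_real, Real.norm_eq_abs]
  have hind := ind_norm_le y y'
  have hmain : |Real.log (2 / M * |Real.sinh (M * (y' - y) / 2)|)| ≤
      2 * |Real.log (M / 2)| + (M / 2 + 1) * (|y| + |y'|) + Fsing (y - y') := by
    rcases eq_or_ne (y' - y) 0 with h0 | h0
    · rw [h0]
      norm_num [Real.log_zero]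
      have h1 := Fsing_nonneg (y - y')
      have h2 : (0:ℝ) ≤ (M / 2 + 1) * (|y| + |y'|) :=
        mul_nonneg (by positivity) (by positivity)
      have h3 : (0:ℝ) ≤ |Real.log (M / 2)| := abs_nonneg _
      linarith
    · set u := M * (y' - y) / 2 with hu_def
      have hu : u ≠ 0 := by
        apply div_ne_zero _ two_ne_zero
        exact mul_ne_zero hM.ne' h0
      have hsu : |Real.sinh u| ≠ 0 := abs_ne_zero.mpr (Real.sinh_ne_zero.mpr hu)
      have h2M : (2:ℝ) / M ≠ 0 := by positivity
      rw [Real.log_mul h2M hsu]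
      have hlog2M : Real.log (2 / M) = -Real.log (M / 2) := by
        rw [← Real.log_inv, inv_div]
      have step1 : |Real.log (2 / M) + Real.log (|Real.sinh u|)| ≤
          |Real.log (M / 2)| + |Real.log (|Real.sinh u|)| := by
        refine (abs_add_le _ _).trans ?_
        rw [hlog2M, abs_neg]
      have step2 := abs_log_abs_sinh_le hu
      have huabs : |u| = M / 2 * |y' - y| := by
        rw [hu_def, abs_div, abs_mul, abs_of_pos hM]
        norm_num
        ring
      have step3 : |Real.log (|u|)| ≤ |Real.log (M / 2)| + |Real.log (|y' - y|)| := by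
        rw [huabs, Real.log_mul (by positivity) (abs_ne_zero.mpr h0)]
        exact abs_add_le _ _
      have step4 := abs_log_abs_le (y' - y)
      have step5 : M / 2 * |y' - y| ≤ M / 2 * (|y| + |y'|) :=
        mul_le_mul_of_nonneg_left habs (by positivity)
      rw [hFs]
      have hFnn := Fsing_nonneg (y' - y)
      calc |Real.log (2 / M) + Real.log (|Real.sinh u|)|
          ≤ |Real.log (M / 2)| + |Real.log (|Real.sinh u|)| := step1
        _ ≤ |Real.log (M / 2)| + (|Real.log (|u|)| + |u|) := by linarith
        _ ≤ 2 * |Real.log (M / 2)| + |Real.log (|y' - y|)| + |u| := by linarith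
        _ ≤ 2 * |Real.log (M / 2)| + (|y' - y| + Fsing (y' - y)) + M / 2 * |y' - y| := by
            rw [huabs]; linarith
        _ ≤ 2 * |Real.log (M / 2)| + (M / 2 + 1) * (|y| + |y'|) + Fsing (y' - y) := by
            nlinarith
  linarith

lemma K_BH_eq_K_th (M : ℝ) (hM : 0 < M) {y y' : ℝ} (h : y ≠ y') :
    K_BH M y y' = K_th (2 * Real.pi / M) y y'
      + ((Real.log M - M * (y + y') / 2 : ℝ) : ℂ) := by
  have hπ : (0:ℝ) < Real.pi := Real.pi_pos
  have ht : y' - y ≠ 0 := sub_ne_zero.mpr (Ne.symm h)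
  have hβπ : (2 * Real.pi / M) / Real.pi = 2 / M := by field_simp
  have harg : Real.pi * (y' - y) / (2 * Real.pi / M) = M * (y' - y) / 2 := by
    rw [div_div_eq_mul_div]
    rw [div_eq_div_iff (by positivity) (by norm_num)]
    ring
  have hu : M * (y' - y) / 2 ≠ 0 := div_ne_zero (mul_ne_zero hM.ne' ht) two_ne_zero
  have hs : Real.sinh (M * (y' - y) / 2) ≠ 0 := Real.sinh_ne_zero.mpr hu
  have hexp : Real.exp (-(M * y)) - Real.exp (-(M * y'))
      = Real.exp (-(M * (y + y') / 2)) * (2 * Real.sinh (M * (y' - y) / 2)) := by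
    rw [Real.sinh_eq]
    have h1 : -(M * y) = -(M * (y + y') / 2) + M * (y' - y) / 2 := by ring
    have h2 : -(M * y') = -(M * (y + y') / 2) + -(M * (y' - y) / 2) := by ring
    rw [h1, h2, Real.exp_add, Real.exp_add]
    ring
  have habs : |Real.exp (-(M * y)) - Real.exp (-(M * y'))|
      = Real.exp (-(M * (y + y') / 2)) * (2 * |Real.sinh (M * (y' - y) / 2)|) := by
    rw [hexp, abs_mul, abs_of_pos (Real.exp_pos _), abs_mul]
    norm_num
  have hreal : Real.log (|Real.exp (-(M * y)) - Real.exp (-(M * y'))|)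
      = Real.log ((2 / M) * |Real.sinh (M * (y' - y) / 2)|)
        + (Real.log M - M * (y + y') / 2) := by
    rw [habs, Real.log_mul (Real.exp_pos _).ne' (by positivity), Real.log_exp,
      Real.log_mul two_ne_zero (abs_ne_zero.mpr hs),
      Real.log_mul (by positivity : (2:ℝ)/M ≠ 0) (abs_ne_zero.mpr hs),
      Real.log_div two_ne_zero hM.ne']
    ring
  rw [K_BH, K_th, hβπ, harg, hreal]
  push_cast
  ring

theorem stmt16 (M : ℝ) (hM : 0 < M) (β : ℝ) (hβ : β = 2 * Real.pi / M)
    (f₁ f₂ : SchwartzMap ℝ ℂ)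
    (hf₁ : ∫ y : ℝ, f₁ y = 0) (hf₂ : ∫ y : ℝ, f₂ y = 0) :
    Integrable (fun p : ℝ × ℝ => f₁ p.1 * (starRingEnd ℂ) (f₂ p.2) * K_BH M p.1 p.2) ∧
    Integrable (fun p : ℝ × ℝ => f₁ p.1 * (starRingEnd ℂ) (f₂ p.2) * K_th β p.1 p.2) ∧
    (∫ p : ℝ × ℝ, f₁ p.1 * (starRingEnd ℂ) (f₂ p.2) * K_BH M p.1 p.2)
      = ∫ p : ℝ × ℝ, f₁ p.1 * (starRingEnd ℂ) (f₂ p.2) * K_th β p.1 p.2 := by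
  subst hβ
  -- measurability facts
  have mKth : Measurable (fun p : ℝ × ℝ => K_th (2 * Real.pi / M) p.1 p.2) := by
    unfold K_th
    apply Measurable.add
    · apply Complex.measurable_ofReal.comp
      apply Real.measurable_log.comp
      exact (measurable_const.mul
        ((Real.continuous_sinh.measurable.comp
          ((measurable_const.mul (measurable_snd.sub measurable_fst)).div_const _)).abs))
    · exact Measurable.ite (measurableSet_lt measurable_snd measurable_fst)
        measurable_const measurable_const
  have Gc : Continuous (fun p : ℝ × ℝ => f₁ p.1 * (starRingEnd ℂ) (f₂ p.2)) :=
    (f₁.continuous.comp continuous_fst).mul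
      (Complex.continuous_conj.comp (f₂.continuous.comp continuous_snd))
  -- basic integrability facts
  have hC₁ : ∃ C, ∀ x : ℝ, ‖f₁ x‖ ≤ C :=
    ⟨‖f₁.toBoundedContinuousFunction‖, fun x => by
      simpa [SchwartzMap.toBoundedContinuousFunction_apply] using
        f₁.toBoundedContinuousFunction.norm_coe_le_norm x⟩
  have h1n : Integrable (fun y : ℝ => ‖f₁ y‖) := f₁.integrable.norm
  have h2n : Integrable (fun y : ℝ => ‖f₂ y‖) := f₂.integrable.norm
  have h1p : Integrable (fun y : ℝ => |y| * ‖f₁ y‖) := by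
    simpa using f₁.integrable_pow_mul volume 1
  have h2p : Integrable (fun y : ℝ => |y| * ‖f₂ y‖) := by
    simpa using f₂.integrable_pow_mul volume 1
  -- integrability of the dominating function
  have hconv : Integrable (fun p : ℝ × ℝ => ‖f₂ p.2‖ * Fsing (p.1 - p.2)) := by
    have := h2n.convolution_integrand (ContinuousLinearMap.mul ℝ ℝ) Fsing_integrable
    rw [← Measure.volume_eq_prod] at this
    simpa using this
  have ht4 : Integrable (fun p : ℝ × ℝ => ‖f₁ p.1‖ * (‖f₂ p.2‖ * Fsing (p.1 - p.2))) := by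
    obtain ⟨C₁, hC₁'⟩ := hC₁
    apply hconv.bdd_mul
      ((continuous_norm.comp (f₁.continuous.comp continuous_fst)).aestronglyMeasurable)
    exact (Filter.Eventually.of_forall (fun p => by simpa using hC₁' p.1) : ∀ᵐ p : ℝ × ℝ ∂volume, ‖‖f₁ p.1‖‖ ≤ C₁)
  have ht1 : Integrable (fun p : ℝ × ℝ =>
      (‖f₁ p.1‖ * ‖f₂ p.2‖) * (Real.pi + 2 * |Real.log (M / 2)|)) := by
    have := (h1n.mul_prod h2n).mul_const (Real.pi + 2 * |Real.log (M / 2)|)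
    rwa [← Measure.volume_eq_prod] at this
  have ht2 : Integrable (fun p : ℝ × ℝ =>
      (M / 2 + 1) * ((|p.1| * ‖f₁ p.1‖) * ‖f₂ p.2‖)) := by
    have := (h1p.mul_prod h2n).const_mul (M / 2 + 1)
    rwa [← Measure.volume_eq_prod] at this
  have ht3 : Integrable (fun p : ℝ × ℝ =>
      (M / 2 + 1) * (‖f₁ p.1‖ * (|p.2| * ‖f₂ p.2‖))) := by
    have := (h1n.mul_prod h2p).const_mul (M / 2 + 1)
    rwa [← Measure.volume_eq_prod] at this
  have hDint : Integrable (fun p : ℝ × ℝ =>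
      (‖f₁ p.1‖ * ‖f₂ p.2‖) * (Real.pi + 2 * |Real.log (M / 2)|)
      + (M / 2 + 1) * ((|p.1| * ‖f₁ p.1‖) * ‖f₂ p.2‖)
      + (M / 2 + 1) * (‖f₁ p.1‖ * (|p.2| * ‖f₂ p.2‖))
      + ‖f₁ p.1‖ * (‖f₂ p.2‖ * Fsing (p.1 - p.2))) :=
    ((ht1.add ht2).add ht3).add ht4
  -- integrability for K_th
  have Ith : Integrable (fun p : ℝ × ℝ =>
      f₁ p.1 * (starRingEnd ℂ) (f₂ p.2) * K_th (2 * Real.pi / M) p.1 p.2) := by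
    apply hDint.mono' (Gc.aestronglyMeasurable.mul mKth.aestronglyMeasurable)
    apply Filter.Eventually.of_forall
    intro p
    simp only [Pi.mul_apply]
    rw [norm_mul, norm_mul, RCLike.norm_conj]
    calc ‖f₁ p.1‖ * ‖f₂ p.2‖ * ‖K_th (2 * Real.pi / M) p.1 p.2‖
        ≤ ‖f₁ p.1‖ * ‖f₂ p.2‖ *
            ((Real.pi + 2 * |Real.log (M / 2)|) + (M / 2 + 1) * (|p.1| + |p.2|)
              + Fsing (p.1 - p.2)) :=
          mul_le_mul_of_nonneg_left (K_th_norm_le M hM p.1 p.2) (by positivity)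
      _ = _ := by ring
  -- integrability of the affine pieces
  have hconjf₂ : Integrable (fun y : ℝ => (starRingEnd ℂ) (f₂ y)) := by
    apply h2n.mono' ((Complex.continuous_conj.comp f₂.continuous).aestronglyMeasurable)
    exact Filter.Eventually.of_forall fun y => by simp
  have hintconj : ∫ y : ℝ, (starRingEnd ℂ) (f₂ y) = 0 := by
    rw [integral_conj, hf₂, map_zero]
  have hnormaff : ∀ (c : ℝ) (y : ℝ), ‖(c : ℂ) * (y : ℂ) / 2‖ = |c| / 2 * |y| := by
    intro c y
    have : ((c : ℂ) * (y : ℂ) / 2) = ((c * y / 2 : ℝ) : ℂ) := by push_cast; ring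
    rw [this, Complex.norm_real, Real.norm_eq_abs, abs_div, abs_mul, abs_two]
    ring
  have hf1aff : Integrable (fun y : ℝ => f₁ y * ((Real.log M : ℂ) - (M : ℂ) * (y : ℂ) / 2)) := by
    apply ((h1n.const_mul |Real.log M|).add (h1p.const_mul (M / 2))).mono'
      ((f₁.continuous.mul (continuous_const.sub
        ((continuous_const.mul Complex.continuous_ofReal).div_const 2))).aestronglyMeasurable)
    apply Filter.Eventually.of_forall
    intro y
    show ‖f₁ y * ((Real.log M : ℂ) - (M : ℂ) * (y : ℂ) / 2)‖ ≤ |Real.log M| * ‖f₁ y‖ + M / 2 * (|y| * ‖f₁ y‖)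
    rw [norm_mul]
    have hb : ‖(Real.log M : ℂ) - (M : ℂ) * (y : ℂ) / 2‖ ≤ |Real.log M| + M / 2 * |y| := by
      refine (norm_sub_le _ _).trans ?_
      rw [Complex.norm_real, Real.norm_eq_abs, hnormaff M y, abs_of_pos hM]
    calc ‖f₁ y‖ * ‖(Real.log M : ℂ) - (M : ℂ) * (y : ℂ) / 2‖
        ≤ ‖f₁ y‖ * (|Real.log M| + M / 2 * |y|) :=
          mul_le_mul_of_nonneg_left hb (norm_nonneg _)
      _ = |Real.log M| * ‖f₁ y‖ + M / 2 * (|y| * ‖f₁ y‖) := by ring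
  have hf2aff : Integrable (fun y : ℝ => (starRingEnd ℂ) (f₂ y) * (-(M : ℂ) * (y : ℂ) / 2)) := by
    apply (h2p.const_mul (M / 2)).mono'
      (((Complex.continuous_conj.comp f₂.continuous).mul
        ((continuous_const.mul Complex.continuous_ofReal).div_const 2)).aestronglyMeasurable)
    apply Filter.Eventually.of_forall
    intro y
    simp only [Function.comp_apply, Pi.mul_apply]
    rw [norm_mul, RCLike.norm_conj]
    have hb : ‖-(M : ℂ) * (y : ℂ) / 2‖ = M / 2 * |y| := by
      have : (-(M : ℂ) * (y : ℂ) / 2) = ((-M : ℝ) : ℂ) * (y : ℂ) / 2 := by push_cast; ring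
      rw [this, hnormaff (-M) y, abs_neg, abs_of_pos hM]
    rw [hb]
    calc ‖f₂ y‖ * (M / 2 * |y|) = M / 2 * (|y| * ‖f₂ y‖) := by ring
      _ ≤ M / 2 * (|y| * ‖f₂ y‖) := le_refl _
  have hA1 : Integrable (fun p : ℝ × ℝ =>
      (f₁ p.1 * ((Real.log M : ℂ) - (M : ℂ) * (p.1 : ℂ) / 2)) * (starRingEnd ℂ) (f₂ p.2)) := by
    have := hf1aff.mul_prod hconjf₂
    rwa [← Measure.volume_eq_prod] at this
  have hA2 : Integrable (fun p : ℝ × ℝ =>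
      f₁ p.1 * ((starRingEnd ℂ) (f₂ p.2) * (-(M : ℂ) * (p.2 : ℂ) / 2))) := by
    have hint1 : Integrable (fun y : ℝ => (f₁ y : ℂ)) volume := f₁.integrable
    have := hint1.mul_prod hf2aff
    rwa [← Measure.volume_eq_prod] at this
  have intA1 : (∫ p : ℝ × ℝ,
      (f₁ p.1 * ((Real.log M : ℂ) - (M : ℂ) * (p.1 : ℂ) / 2)) * (starRingEnd ℂ) (f₂ p.2)) = 0 := by
    rw [Measure.volume_eq_prod]
    have h := integral_prod_mul (μ := (volume : Measure ℝ)) (ν := (volume : Measure ℝ))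
      (fun x : ℝ => f₁ x * ((Real.log M : ℂ) - (M : ℂ) * (x : ℂ) / 2))
      (fun y : ℝ => (starRingEnd ℂ) (f₂ y))
    exact h.trans (by rw [hintconj, mul_zero])
  have intA2 : (∫ p : ℝ × ℝ,
      f₁ p.1 * ((starRingEnd ℂ) (f₂ p.2) * (-(M : ℂ) * (p.2 : ℂ) / 2))) = 0 := by
    rw [Measure.volume_eq_prod]
    have h := integral_prod_mul (μ := (volume : Measure ℝ)) (ν := (volume : Measure ℝ))
      (fun x : ℝ => f₁ x)
      (fun y : ℝ => (starRingEnd ℂ) (f₂ y) * (-(M : ℂ) * (y : ℂ) / 2))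
    refine h.trans ?_
    rw [show (∫ x : ℝ, f₁ x) = 0 from hf₁, zero_mul]
  -- the diagonal is null
  have hnull : (volume : Measure (ℝ × ℝ)) {p : ℝ × ℝ | p.1 = p.2} = 0 := by
    have hms : MeasurableSet {p : ℝ × ℝ | p.1 = p.2} :=
      measurableSet_eq_fun measurable_fst measurable_snd
    rw [Measure.volume_eq_prod, Measure.measure_prod_null hms]
    apply Filter.Eventually.of_forall
    intro x
    have hpre : (Prod.mk x ⁻¹' {p : ℝ × ℝ | p.1 = p.2}) = {x} := by
      ext z; simp [eq_comm]
    simp [hpre]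
  -- a.e. identity between the two kernels
  have hae : (fun p : ℝ × ℝ => f₁ p.1 * (starRingEnd ℂ) (f₂ p.2) * K_BH M p.1 p.2)
      =ᵐ[volume] (fun p : ℝ × ℝ =>
        f₁ p.1 * (starRingEnd ℂ) (f₂ p.2) * K_th (2 * Real.pi / M) p.1 p.2
        + ((f₁ p.1 * ((Real.log M : ℂ) - (M : ℂ) * (p.1 : ℂ) / 2)) * (starRingEnd ℂ) (f₂ p.2)
          + f₁ p.1 * ((starRingEnd ℂ) (f₂ p.2) * (-(M : ℂ) * (p.2 : ℂ) / 2)))) := by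
    have hmem : {p : ℝ × ℝ | p.1 ≠ p.2} ∈ MeasureTheory.ae (volume : Measure (ℝ × ℝ)) := by
      rw [mem_ae_iff]
      have hc : {p : ℝ × ℝ | p.1 ≠ p.2}ᶜ = {p : ℝ × ℝ | p.1 = p.2} := by
        ext p; simp
      rw [hc]
      exact hnull
    filter_upwards [hmem] with p hp
    rw [K_BH_eq_K_th M hM hp]
    push_cast
    ring
  have IA : Integrable (fun p : ℝ × ℝ =>
      (f₁ p.1 * ((Real.log M : ℂ) - (M : ℂ) * (p.1 : ℂ) / 2)) * (starRingEnd ℂ) (f₂ p.2)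
      + f₁ p.1 * ((starRingEnd ℂ) (f₂ p.2) * (-(M : ℂ) * (p.2 : ℂ) / 2))) := hA1.add hA2
  have IBH : Integrable (fun p : ℝ × ℝ =>
      f₁ p.1 * (starRingEnd ℂ) (f₂ p.2) * K_BH M p.1 p.2) := (Ith.add IA).congr hae.symm
  refine ⟨IBH, Ith, ?_⟩
  rw [integral_congr_ae hae, integral_add Ith IA, integral_add hA1 hA2, intA1, intA2]
  simp
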